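/- Let (X, d, μ) be a doubling metric measure space, 1 < p < ∞, and let f ∈ L^1_loc(X) be non-negative and satisfy the reverse Hölder inequality (⨍_B f^p dμ)^{1/p} ≤ c ⨍_B f dμ for all balls B. Then for every ball B₀ in X and every λ > ess inf_{B₀} Mf, one has ∫_{{x ∈ B₀ : Mf(x) > λ}} f^p dμ ≤ c' λ^p μ({x ∈ 100B₀ : Mf(x) > λ}), where c' depends only on p, the doubling constant and c, and Mf is the Hardy–Littlewood maximal function restricted to 100B₀. -/

import Mathlib

set_option linter.unusedSectionVars false
set_option linter.unusedVariables false
set_option maxHeartbeats 1000000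


open MeasureTheory Metric
open scoped NNReal ENNReal
open Function

/-- `μ` is a doubling measure with doubling constant `c_d`. -/
def IsDoublingMeasure {X : Type*} [MetricSpace X] [MeasurableSpace X]
    (μ : Measure X) (c_d : ℝ≥0) : Prop :=
  ∀ (x : X) (r : ℝ), 0 < r → μ (ball x (2 * r)) ≤ (c_d : ℝ≥0∞) * μ (ball x r)

/-- `f` satisfies the reverse Hölder inequality with exponent `p` and constant `c`. -/
def ReverseHolder {X : Type*} [MetricSpace X] [MeasurableSpace X]
    (μ : Measure X) (p c : ℝ) (f : X → ℝ) : Prop :=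
  ∀ (x : X) (r : ℝ), 0 < r →
    IntegrableOn (fun y => f y ^ p) (ball x r) μ ∧
    (⨍ y in ball x r, f y ^ p ∂μ) ^ (1 / p) ≤ c * ⨍ y in ball x r, f y ∂μ

/-- The Hardy–Littlewood maximal function of `f` restricted to the ball `100B₀`, where
`B₀ = B(x₀, r₀)`:  `Mf(y) = sup { ⨍_B |f| dμ : B ∋ y, B ⊆ 100B₀ }`. -/
noncomputable def restrictedMaximal {X : Type*} [MetricSpace X] [MeasurableSpace X]
    (μ : Measure X) (f : X → ℝ) (x₀ : X) (r₀ : ℝ) (y : X) : ℝ :=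
  sSup ((fun B : X × ℝ => ⨍ z in ball B.1 B.2, |f z| ∂μ) ''
    {B : X × ℝ | 0 < B.2 ∧ y ∈ ball B.1 B.2 ∧ ball B.1 B.2 ⊆ ball x₀ (100 * r₀)})

section GoodLambdaAux

variable {X : Type*} [MetricSpace X] [MeasurableSpace X] [BorelSpace X]
  {μ : Measure X} {c_d : ℝ≥0} {f : X → ℝ} {p c : ℝ}

lemma doubling_pow (hdb : IsDoublingMeasure μ c_d) (x : X) {r : ℝ} (hr : 0 < r) (k : ℕ) :
    μ (ball x (2 ^ k * r)) ≤ (c_d : ℝ≥0∞) ^ k * μ (ball x r) := by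
  induction k with
  | zero => simp
  | succ n ih =>
    have h1 : (2:ℝ) ^ (n+1) * r = 2 * (2 ^ n * r) := by ring
    calc μ (ball x (2 ^ (n+1) * r)) = μ (ball x (2 * (2 ^ n * r))) := by rw [h1]
      _ ≤ (c_d : ℝ≥0∞) * μ (ball x (2 ^ n * r)) := hdb x _ (by positivity)
      _ ≤ (c_d : ℝ≥0∞) * ((c_d : ℝ≥0∞) ^ n * μ (ball x r)) := mul_le_mul_right ih _
      _ = (c_d : ℝ≥0∞) ^ (n+1) * μ (ball x r) := by ring

lemma doubling_le (hdb : IsDoublingMeasure μ c_d) (x : X) {r s : ℝ} (hr : 0 < r) {k : ℕ}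
    (hs : s ≤ 2 ^ k * r) : μ (ball x s) ≤ (c_d : ℝ≥0∞) ^ k * μ (ball x r) :=
  (measure_mono (ball_subset_ball hs)).trans (doubling_pow hdb x hr k)

lemma setIntegral_eq_avg (g : X → ℝ) {B : Set X} (h0 : μ B ≠ 0) (hfin : μ B ≠ ⊤) :
    ∫ z in B, g z ∂μ = (μ B).toReal * ⨍ z in B, g z ∂μ := by
  rw [setAverage_eq, smul_eq_mul, ← mul_assoc, measureReal_def, mul_inv_cancel₀, one_mul]
  exact ENNReal.toReal_ne_zero.2 ⟨h0, hfin⟩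

lemma avg_nonneg {g : X → ℝ} (hg : ∀ z, 0 ≤ g z) {B : Set X} (hB : MeasurableSet B) :
    0 ≤ ⨍ z in B, g z ∂μ := by
  rw [setAverage_eq, smul_eq_mul]
  exact mul_nonneg (by positivity) (setIntegral_nonneg hB fun z _ => hg z)

lemma avg_abs (hf0 : ∀ z, 0 ≤ f z) (B : Set X) :
    (⨍ z in B, |f z| ∂μ) = ⨍ z in B, f z ∂μ := by
  simp only [abs_of_nonneg (hf0 _)]

lemma ball_shrink {x x₀ : X} {r R : ℝ} (hr : 0 < r) (hR : 0 < R)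
    (hsub : ball x r ⊆ ball x₀ R) : ball x r = ball x (min r (2 * R)) := by
  apply Set.Subset.antisymm
  · intro z hz
    have hx : x ∈ ball x₀ R := hsub (mem_ball_self hr)
    have hz' : z ∈ ball x₀ R := hsub hz
    have h1 : dist z x ≤ dist z x₀ + dist x₀ x := dist_triangle _ _ _
    rw [mem_ball] at hz hx hz' ⊢
    rw [dist_comm x₀ x] at h1
    exact lt_min hz (by linarith)
  · exact ball_subset_ball (min_le_left _ _)

lemma vitali_balls {E : Set X} (a : E → X) (ρ : E → ℝ) (R : ℝ)
    (hρ : ∀ y, 0 < ρ y) (hρR : ∀ y, ρ y ≤ R) (hmem : ∀ y : E, (y : X) ∈ ball (a y) (ρ y)) :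
    ∃ u : Set E, (u.PairwiseDisjoint fun i => ball (a i) (ρ i)) ∧
      ∀ y : E, ∃ i ∈ u, (y : X) ∈ ball (a i) (6 * ρ i) := by
  obtain ⟨u, hu_sub, hdisj, hcov⟩ :=
    Vitali.exists_disjoint_subfamily_covering_enlargement_closedBall (Set.univ : Set E) a ρ R
      (fun i _ => hρR i) 4 (by norm_num)
  refine ⟨u, fun i hi j hj hij =>
    ((hdisj hi hj hij).mono ball_subset_closedBall ball_subset_closedBall), fun y => ?_⟩
  obtain ⟨i, hi, hsub⟩ := hcov y (Set.mem_univ y)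
  have h1 : (y : X) ∈ closedBall (a i) (4 * ρ i) := hsub (ball_subset_closedBall (hmem y))
  exact ⟨i, hi, closedBall_subset_ball (by nlinarith [hρ i]) h1⟩

lemma countable_of_disjoint_balls
    (hopen : ∀ U : Set X, IsOpen U → U.Nonempty → 0 < μ U)
    (hbdd : ∀ s : Set X, Bornology.IsBounded s → μ s < ⊤)
    {E : Set X} (a : E → X) (ρ : E → ℝ) (hρ : ∀ y, 0 < ρ y)
    {W : Set X} (hW : Bornology.IsBounded W) (hsub : ∀ i : E, ball (a i) (ρ i) ⊆ W)
    {u : Set E} (hdisj : u.PairwiseDisjoint fun i => ball (a i) (ρ i)) :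
    u.Countable := by
  have hdisj' : Pairwise (Disjoint on fun i : u => ball (a i) (ρ i)) := by
    intro i j hij
    exact hdisj i.2 j.2 (fun h => hij (Subtype.ext h))
  have hfin : μ (⋃ i : u, ball (a i) (ρ i)) ≠ ⊤ := by
    refine ne_of_lt (lt_of_le_of_lt (measure_mono ?_) (hbdd W hW))
    exact Set.iUnion_subset fun i => hsub i
  have hcnt := MeasureTheory.Measure.countable_meas_pos_of_disjoint_of_meas_iUnion_ne_top μ
    (fun i : u => measurableSet_ball) hdisj' hfin
  have : {i : u | 0 < μ (ball (a i) (ρ i))} = Set.univ := by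
    refine Set.eq_univ_of_forall fun i => hopen _ isOpen_ball ⟨_, mem_ball_self (hρ _)⟩
  rw [this, Set.countable_univ_iff] at hcnt
  exact Set.countable_coe_iff.mp hcnt

lemma rh_int_bound (hRH : ReverseHolder μ p c f) (hp : 1 < p) (hc : 0 ≤ c)
    (hf0 : ∀ z, 0 ≤ f z) {b : X} {σ lam : ℝ} (hσ : 0 < σ)
    (hμ0 : μ (ball b σ) ≠ 0) (hμfin : μ (ball b σ) ≠ ⊤)
    (havg : (⨍ z in ball b σ, f z ∂μ) ≤ lam) :
    ∫ z in ball b σ, f z ^ p ∂μ ≤ (μ (ball b σ)).toReal * (c * lam) ^ p := by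
  obtain ⟨hint, hineq⟩ := hRH b σ hσ
  set Avp := ⨍ z in ball b σ, f z ^ p ∂μ with hAvp
  have hp0 : (0:ℝ) < p := lt_trans one_pos hp
  have hAvp0 : 0 ≤ Avp := avg_nonneg (fun z => Real.rpow_nonneg (hf0 z) p) measurableSet_ball
  have hAv0 : 0 ≤ ⨍ z in ball b σ, f z ∂μ := avg_nonneg hf0 measurableSet_ball
  have key : Avp ≤ (c * lam) ^ p := by
    have h1 : (Avp ^ (1/p)) ^ p = Avp := by
      rw [← Real.rpow_mul hAvp0, one_div_mul_cancel hp0.ne', Real.rpow_one]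
    calc Avp = (Avp ^ (1/p)) ^ p := h1.symm
      _ ≤ (c * ⨍ z in ball b σ, f z ∂μ) ^ p :=
          Real.rpow_le_rpow (Real.rpow_nonneg hAvp0 _) hineq hp0.le
      _ ≤ (c * lam) ^ p :=
          Real.rpow_le_rpow (mul_nonneg hc hAv0) (mul_le_mul_of_nonneg_left havg hc) hp0.le
  rw [setIntegral_eq_avg _ hμ0 hμfin]
  exact mul_le_mul_of_nonneg_left key ENNReal.toReal_nonneg

def maxSet (μ : Measure X) (f : X → ℝ) (x₀ : X) (r₀ : ℝ) (y : X) : Set ℝ :=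
  (fun B : X × ℝ => ⨍ z in ball B.1 B.2, |f z| ∂μ) ''
    {B : X × ℝ | 0 < B.2 ∧ y ∈ ball B.1 B.2 ∧ ball B.1 B.2 ⊆ ball x₀ (100 * r₀)}

lemma restrictedMaximal_eq (x₀ : X) (r₀ : ℝ) (y : X) :
    restrictedMaximal μ f x₀ r₀ y = sSup (maxSet μ f x₀ r₀ y) := rfl

lemma maximal_nonneg (x₀ : X) (r₀ : ℝ) (y : X) : 0 ≤ restrictedMaximal μ f x₀ r₀ y := by
  rw [restrictedMaximal_eq]
  refine Real.sSup_nonneg ?_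
  rintro x ⟨⟨a, ρ⟩, ⟨h1, h2, h3⟩, rfl⟩
  exact avg_nonneg (fun z => abs_nonneg _) measurableSet_ball

lemma exists_witness (hf0 : ∀ z, 0 ≤ f z) {x₀ y : X} {r₀ lam : ℝ} (hlam : 0 ≤ lam)
    (hy : lam < restrictedMaximal μ f x₀ r₀ y) :
    ∃ a ρ, 0 < ρ ∧ y ∈ ball a ρ ∧ ball a ρ ⊆ ball x₀ (100 * r₀) ∧
      lam < ⨍ z in ball a ρ, f z ∂μ := by
  rw [restrictedMaximal_eq] at hy
  rcases (maxSet μ f x₀ r₀ y).eq_empty_or_nonempty with h | h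
  · rw [h, Real.sSup_empty] at hy
    linarith
  · obtain ⟨s, hsS, hs⟩ := exists_lt_of_lt_csSup h hy
    obtain ⟨⟨a, ρ⟩, ⟨h1, h2, h3⟩, rfl⟩ := hsS
    refine ⟨a, ρ, h1, h2, h3, ?_⟩
    rw [← avg_abs hf0]
    exact hs

lemma le_maximal (hf0 : ∀ z, 0 ≤ f z) {x₀ a y : X} {r₀ ρ : ℝ}
    (hbd : BddAbove (maxSet μ f x₀ r₀ y)) (hρ : 0 < ρ) (hy : y ∈ ball a ρ)
    (hsub : ball a ρ ⊆ ball x₀ (100 * r₀)) :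
    (⨍ z in ball a ρ, f z ∂μ) ≤ restrictedMaximal μ f x₀ r₀ y := by
  rw [restrictedMaximal_eq, ← avg_abs hf0]
  exact le_csSup hbd ⟨(a, ρ), ⟨hρ, hy, hsub⟩, rfl⟩

lemma junk_mem_U {x₀ : X} {r₀ : ℝ} {z : X} (hz : ¬ BddAbove (maxSet μ f x₀ r₀ z)) :
    z ∈ ball x₀ (100 * r₀) := by
  rcases (maxSet μ f x₀ r₀ z).eq_empty_or_nonempty with h | h
  · exact absurd (h ▸ bddAbove_empty) hz
  · obtain ⟨s, ⟨⟨a, ρ⟩, ⟨h1, h2, h3⟩, rfl⟩⟩ := h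
    exact h3 h2


lemma junk_null
    (hopen : ∀ U : Set X, IsOpen U → U.Nonempty → 0 < μ U)
    (hbdd : ∀ s : Set X, Bornology.IsBounded s → μ s < ⊤)
    (hdb : IsDoublingMeasure μ c_d)
    (hf0 : ∀ z, 0 ≤ f z)
    (hfint : ∀ (x : X) (r : ℝ), 0 < r → IntegrableOn f (ball x r) μ)
    {x₀ : X} {r₀ : ℝ} (hr₀ : 0 < r₀) :
    μ {z | ¬ BddAbove (maxSet μ f x₀ r₀ z)} = 0 := by
  set U : Set X := ball x₀ (100 * r₀) with hU
  set J : Set X := {z | ¬ BddAbove (maxSet μ f x₀ r₀ z)} with hJdef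
  have hr100 : (0:ℝ) < 100 * r₀ := by positivity
  have hUfin : μ U ≠ ⊤ := (hbdd U isBounded_ball).ne
  set A : ℝ≥0∞ := ∫⁻ w in U, ENNReal.ofReal (f w) ∂μ with hA
  have hAfin : A ≠ ⊤ := by
    rw [hA, ← ofReal_integral_eq_lintegral_ofReal (hfint x₀ _ hr100)
      (Filter.Eventually.of_forall fun z => hf0 z)]
    exact ENNReal.ofReal_ne_top
  have key : ∀ t : ℝ, 0 < t →
      μ J * ENNReal.ofReal t ≤ (c_d : ℝ≥0∞) ^ 3 * A := by
    intro t ht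
    have hwit : ∀ z : J, ∃ a ρ, 0 < ρ ∧ (z : X) ∈ ball a ρ ∧ ball a ρ ⊆ U ∧
        ρ ≤ 200 * r₀ ∧ t < ⨍ w in ball a ρ, f w ∂μ := by
      intro z
      obtain ⟨s, hsS, hs⟩ := not_bddAbove_iff.1 z.2 t
      obtain ⟨⟨a, ρ⟩, ⟨h1, h2, h3⟩, rfl⟩ := hsS
      have heq : ball a ρ = ball a (min ρ (2 * (100 * r₀))) := ball_shrink h1 hr100 h3
      refine ⟨a, min ρ (2 * (100 * r₀)), lt_min h1 (by positivity), heq ▸ h2, heq ▸ h3,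
        by rw [min_def]; split <;> linarith [min_le_right ρ (2 * (100 * r₀))], ?_⟩
      rw [← heq, ← avg_abs hf0]
      exact hs
    choose a ρ hρ hmem hsubU hρle havg using hwit
    obtain ⟨u, hdisj, hcov⟩ := vitali_balls a ρ (200 * r₀) hρ hρle hmem
    have hcnt : u.Countable :=
      countable_of_disjoint_balls hopen hbdd a ρ hρ isBounded_ball (fun i => hsubU i) hdisj
    haveI := hcnt.to_subtype
    have hJcov : J ⊆ ⋃ i : u, ball (a i) (6 * ρ i) := by
      intro z hz
      obtain ⟨i, hi, hzi⟩ := hcov ⟨z, hz⟩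
      exact Set.mem_iUnion.2 ⟨⟨i, hi⟩, hzi⟩
    have h1 : μ J ≤ ∑' i : u, μ (ball (a i) (6 * ρ i)) :=
      (measure_mono hJcov).trans (measure_iUnion_le _)
    have h2 : ∀ i : u, μ (ball (a (i : J)) (6 * ρ (i : J))) ≤
        (c_d : ℝ≥0∞) ^ 3 * μ (ball (a (i : J)) (ρ (i : J))) := by
      intro i
      exact doubling_le hdb _ (hρ (i : J)) (by nlinarith [hρ (i : J)])
    have h3 : ∀ i : u, ENNReal.ofReal t * μ (ball (a (i : J)) (ρ (i : J))) ≤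
        ∫⁻ w in ball (a (i : J)) (ρ (i : J)), ENNReal.ofReal (f w) ∂μ := by
      intro i
      set B : Set X := ball (a (i : J)) (ρ (i : J)) with hB
      have hB0 : μ B ≠ 0 := (hopen B isOpen_ball ⟨_, mem_ball_self (hρ _)⟩).ne'
      have hBfin : μ B ≠ ⊤ := (hbdd B isBounded_ball).ne
      have hint : IntegrableOn f B μ := hfint _ _ (hρ _)
      have hIB : t * (μ B).toReal ≤ ∫ w in B, f w ∂μ := by
        rw [setIntegral_eq_avg f hB0 hBfin, mul_comm]
        exact mul_le_mul_of_nonneg_left (havg _).le ENNReal.toReal_nonneg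
      calc ENNReal.ofReal t * μ B = ENNReal.ofReal t * ENNReal.ofReal ((μ B).toReal) := by
            rw [ENNReal.ofReal_toReal hBfin]
        _ = ENNReal.ofReal (t * (μ B).toReal) := (ENNReal.ofReal_mul ht.le).symm
        _ ≤ ENNReal.ofReal (∫ w in B, f w ∂μ) := ENNReal.ofReal_le_ofReal hIB
        _ = ∫⁻ w in B, ENNReal.ofReal (f w) ∂μ :=
            ofReal_integral_eq_lintegral_ofReal hint (Filter.Eventually.of_forall fun z => hf0 z)
    have hdisj' : Pairwise (Disjoint on fun i : u => ball (a (i : J)) (ρ (i : J))) := by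
      intro i j hij
      exact hdisj i.2 j.2 (fun h => hij (Subtype.ext h))
    have h4 : ∑' i : u, ∫⁻ w in ball (a (i : J)) (ρ (i : J)), ENNReal.ofReal (f w) ∂μ ≤ A := by
      rw [← lintegral_iUnion (fun i : u => measurableSet_ball) hdisj']
      exact lintegral_mono' (Measure.restrict_mono (Set.iUnion_subset fun i => hsubU _) le_rfl)
        le_rfl
    calc μ J * ENNReal.ofReal t ≤ (∑' i : u, μ (ball (a i) (6 * ρ i))) * ENNReal.ofReal t :=
          mul_le_mul_left h1 _
      _ ≤ (∑' i : u, (c_d : ℝ≥0∞) ^ 3 * μ (ball (a i) (ρ i))) * ENNReal.ofReal t :=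
          mul_le_mul_left (ENNReal.tsum_le_tsum h2) _
      _ = (c_d : ℝ≥0∞) ^ 3 * ∑' i : u, ENNReal.ofReal t * μ (ball (a i) (ρ i)) := by
          rw [ENNReal.tsum_mul_left, ENNReal.tsum_mul_left]; ring
      _ ≤ (c_d : ℝ≥0∞) ^ 3 * ∑' i : u, ∫⁻ w in ball (a i) (ρ i), ENNReal.ofReal (f w) ∂μ :=
          mul_le_mul_right (ENNReal.tsum_le_tsum h3) _
      _ ≤ (c_d : ℝ≥0∞) ^ 3 * A := mul_le_mul_right h4 _
  by_contra hJ0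
  have hT : (c_d : ℝ≥0∞) ^ 3 * A ≠ ⊤ :=
    ENNReal.mul_ne_top (ENNReal.pow_ne_top ENNReal.coe_ne_top) hAfin
  obtain ⟨n, hn⟩ := ENNReal.exists_nat_mul_gt hJ0 hT
  have h5 := key ((n : ℝ) + 1) (by positivity)
  have h6 : (n : ℝ≥0∞) * μ J ≤ μ J * ENNReal.ofReal ((n : ℝ) + 1) := by
    rw [mul_comm]
    refine mul_le_mul_right ?_ _
    calc (n : ℝ≥0∞) = ENNReal.ofReal (n : ℝ) := by simp [ENNReal.ofReal_natCast]
      _ ≤ ENNReal.ofReal ((n : ℝ) + 1) := ENNReal.ofReal_le_ofReal (by linarith)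
  exact absurd ((h6.trans h5)) (not_le.2 hn)
lemma exists_PQ
    (hopen : ∀ U : Set X, IsOpen U → U.Nonempty → 0 < μ U)
    (hbdd : ∀ s : Set X, Bornology.IsBounded s → μ s < ⊤)
    (hdb : IsDoublingMeasure μ c_d)
    {x₀ z₀ : X} {r₀ lam : ℝ} (hr₀ : 0 < r₀) (hlam : 0 < lam)
    (hz₀B : z₀ ∈ ball x₀ r₀)
    (hz₀ : ∀ (b : X) (σ : ℝ), 0 < σ → z₀ ∈ ball b σ → ball b σ ⊆ ball x₀ (100 * r₀) →
      (⨍ z in ball b σ, f z ∂μ) ≤ lam)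
    {y : X} (hyB : y ∈ ball x₀ r₀)
    (hwit : ∃ a ρ, 0 < ρ ∧ y ∈ ball a ρ ∧ ball a ρ ⊆ ball x₀ (100 * r₀) ∧
      lam < ⨍ z in ball a ρ, f z ∂μ) :
    ∃ a ρ b σ, 0 < ρ ∧ 0 < σ ∧ ρ ≤ 200 * r₀ ∧ y ∈ ball a ρ ∧
      ball a ρ ⊆ ball x₀ (100 * r₀) ∧ (lam < ⨍ z in ball a ρ, f z ∂μ) ∧
      (ball a (6 * ρ) ∩ ball x₀ r₀ ⊆ ball b σ) ∧ ((⨍ z in ball b σ, f z ∂μ) ≤ lam) ∧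
      μ (ball b σ) ≤ (c_d : ℝ≥0∞) ^ 8 * μ (ball a ρ) := by
  classical
  have hcd1 : (1 : ℝ≥0∞) ≤ (c_d : ℝ≥0∞) := by
    by_contra h
    push_neg at h
    have h1 : μ (ball y r₀) ≤ μ (ball y (2 * r₀)) :=
      measure_mono (ball_subset_ball (by linarith))
    have h2 := hdb y r₀ hr₀
    have hpos : μ (ball y r₀) ≠ 0 := (hopen _ isOpen_ball ⟨y, mem_ball_self hr₀⟩).ne'
    have hfin : μ (ball y r₀) ≠ ⊤ := (hbdd _ isBounded_ball).ne
    have h3 : (c_d : ℝ≥0∞) * μ (ball y r₀) < 1 * μ (ball y r₀) :=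
      (ENNReal.mul_lt_mul_iff_left hpos hfin).2 h
    rw [one_mul] at h3
    exact absurd ((h1.trans h2).trans_lt h3) (lt_irrefl _)
  have hpow : ∀ k : ℕ, k ≤ 8 → (c_d : ℝ≥0∞) ^ k ≤ (c_d : ℝ≥0∞) ^ 8 :=
    fun k hk => pow_le_pow_right₀ hcd1 hk
  obtain ⟨a, ρ₁, hρ₁, hya₁, hsubU₁, havg₁⟩ := hwit
  have heq : ball a ρ₁ = ball a (min ρ₁ (2 * (100 * r₀))) :=
    ball_shrink hρ₁ (by positivity) hsubU₁
  set ρ := min ρ₁ (2 * (100 * r₀)) with hρdef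
  have hρ : 0 < ρ := lt_min hρ₁ (by positivity)
  have hρle : ρ ≤ 200 * r₀ := le_trans (min_le_right _ _) (by linarith)
  have hya : y ∈ ball a ρ := heq ▸ hya₁
  have hsubU : ball a ρ ⊆ ball x₀ (100 * r₀) := heq ▸ hsubU₁
  have havg : lam < ⨍ z in ball a ρ, f z ∂μ := heq ▸ havg₁
  rcases lt_or_ge r₀ ρ with hcase | hcase
  · -- big radius case : Q = the full ball
    refine ⟨a, ρ, x₀, 100 * r₀, hρ, by positivity, hρle, hya, hsubU, havg, ?_, ?_, ?_⟩
    · intro z hz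
      exact ball_subset_ball (by linarith) hz.2
    · exact hz₀ x₀ (100 * r₀) (by positivity) (ball_subset_ball (by linarith) hz₀B)
        (subset_refl _)
    · have hasub : ball x₀ (100 * r₀) ⊆ ball a (2 ^ 8 * ρ) := by
        intro z hz
        have hax : a ∈ ball x₀ (100 * r₀) := hsubU (mem_ball_self hρ)
        rw [mem_ball] at hz hax ⊢
        have h1 : dist z a ≤ dist z x₀ + dist x₀ a := dist_triangle _ _ _
        rw [dist_comm x₀ a] at h1
        have h2 : (2:ℝ) ^ 8 = 256 := by norm_num
        nlinarith
      exact (measure_mono hasub).trans (doubling_pow hdb a hρ 8)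
  · -- small radius case: chain of balls centred at y
    have hex : ∃ k : ℕ, 99 * r₀ < 2 ^ (k+1) * ρ := by
      obtain ⟨n₀, hn₀⟩ := pow_unbounded_of_one_lt (99 * r₀ / ρ) (one_lt_two (α := ℝ))
      refine ⟨n₀, ?_⟩
      rw [div_lt_iff₀ hρ] at hn₀
      have h1 : (2:ℝ) ^ n₀ ≤ 2 ^ (n₀ + 1) := pow_le_pow_right₀ one_le_two (by omega)
      nlinarith
    set kb := Nat.find hex with hkbdef
    have hkbspec : 99 * r₀ < 2 ^ (kb+1) * ρ := Nat.find_spec hex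
    have hkb0 : kb ≠ 0 := by
      intro h
      rw [h] at hkbspec
      norm_num at hkbspec
      nlinarith
    set K := kb - 1 with hKdef
    have hKsucc : K + 1 = kb := Nat.succ_pred_eq_of_pos (Nat.pos_of_ne_zero hkb0)
    have hK1 : 2 ^ (K+1) * ρ ≤ 99 * r₀ := by
      have h := Nat.find_min hex (show K < kb by omega)
      push_neg at h
      exact h
    have hK2 : 99 * r₀ < 2 ^ (K+2) * ρ := by
      rw [show K + 2 = kb + 1 by omega]
      exact hkbspec
    have hK5 : 5 ≤ K := by
      by_contra h
      push_neg at h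
      have h64 : (2:ℝ) ^ (K+2) ≤ 2 ^ 6 := pow_le_pow_right₀ one_le_two (by omega)
      have h64' : (2:ℝ) ^ 6 = 64 := by norm_num
      nlinarith [hK2]
    have hCU : ∀ k : ℕ, k ≤ K → ball y (2 ^ (k+1) * ρ) ⊆ ball x₀ (100 * r₀) := by
      intro k hk z hz
      rw [mem_ball] at hz ⊢
      have h1 : dist z x₀ ≤ dist z y + dist y x₀ := dist_triangle _ _ _
      have h2 : dist y x₀ < r₀ := mem_ball.1 hyB
      have h3 : (2:ℝ) ^ (k+1) ≤ 2 ^ (K+1) := pow_le_pow_right₀ one_le_two (by omega)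
      nlinarith [mul_le_mul_of_nonneg_right h3 hρ.le]
    have hz₀C : z₀ ∈ ball y (2 ^ (K+1) * ρ) := by
      rw [mem_ball]
      have h1 : dist z₀ y ≤ dist z₀ x₀ + dist x₀ y := dist_triangle _ _ _
      have h2 : dist z₀ x₀ < r₀ := mem_ball.1 hz₀B
      have h3 : dist x₀ y < r₀ := by rw [dist_comm]; exact mem_ball.1 hyB
      have h4 : (2:ℝ) ^ (K+2) = 2 * 2 ^ (K+1) := by ring
      nlinarith
    have htop : (⨍ z in ball y (2 ^ (K+1) * ρ), f z ∂μ) ≤ lam :=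
      hz₀ y _ (by positivity) hz₀C (hCU K le_rfl)
    by_cases hA : ∃ k : ℕ, k ≤ K ∧ lam < ⨍ z in ball y (2 ^ (k+1) * ρ), f z ∂μ
    · obtain ⟨k', hk'K, hk'⟩ := hA
      have hk₁P := Nat.findGreatest_spec
        (P := fun k => lam < ⨍ z in ball y (2 ^ (k+1) * ρ), f z ∂μ) hk'K hk'
      set k₁ := Nat.findGreatest (fun k => lam < ⨍ z in ball y (2 ^ (k+1) * ρ), f z ∂μ) K
        with hk₁def
      have hk₁K : k₁ ≤ K := Nat.findGreatest_le K
      have hmax : ∀ m : ℕ, k₁ < m → m ≤ K →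
          ¬ (lam < ⨍ z in ball y (2 ^ (m+1) * ρ), f z ∂μ) :=
        fun m h1 h2 => Nat.findGreatest_is_greatest h1 h2
      have hk₁ltK : k₁ < K := by
        rcases lt_or_eq_of_le hk₁K with h | h
        · exact h
        · rw [h] at hk₁P
          exact absurd hk₁P (not_lt.2 htop)
      set j := min (k₁ + 3) K with hjdef
      have hjK : j ≤ K := min_le_right _ _
      have hjgt : k₁ < j := lt_min (by omega) hk₁ltK
      have hQavg : (⨍ z in ball y (2 ^ (j+1) * ρ), f z ∂μ) ≤ lam :=
        not_lt.1 (hmax j hjgt hjK)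
      refine ⟨y, 2 ^ (k₁+1) * ρ, y, 2 ^ (j+1) * ρ, by positivity, by positivity, ?_,
        mem_ball_self (by positivity), hCU k₁ hk₁K, hk₁P, ?_, hQavg, ?_⟩
      · have h3 : (2:ℝ) ^ (k₁+1) ≤ 2 ^ (K+1) := pow_le_pow_right₀ one_le_two (by omega)
        nlinarith [mul_le_mul_of_nonneg_right h3 hρ.le]
      · rcases le_or_gt (k₁ + 3) K with hle | hlt
        · have hjeq : j = k₁ + 3 := min_eq_left hle
          intro z hz
          have h1 : dist z y < 6 * (2 ^ (k₁+1) * ρ) := mem_ball.1 hz.1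
          rw [mem_ball, hjeq]
          have he : (2:ℝ) ^ (k₁ + 3 + 1) = 2 ^ (k₁+1) * 2 ^ 3 := by
            rw [show k₁ + 3 + 1 = k₁ + 1 + 3 by omega, pow_add]
          rw [he]
          nlinarith [pow_pos (show (0:ℝ) < 2 by norm_num) (k₁+1)]
        · have hjeq : j = K := min_eq_right (by omega)
          intro z hz
          have h2 : dist z x₀ < r₀ := mem_ball.1 hz.2
          rw [mem_ball, hjeq]
          have h3 : dist x₀ y < r₀ := by rw [dist_comm]; exact mem_ball.1 hyB
          have h1 : dist z y ≤ dist z x₀ + dist x₀ y := dist_triangle _ _ _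
          have h4 : (2:ℝ) ^ (K+2) = 2 * 2 ^ (K+1) := by ring
          nlinarith
      · have hsub8 : (2:ℝ) ^ (j+1) * ρ ≤ 2 ^ 3 * (2 ^ (k₁+1) * ρ) := by
          have h5 : j + 1 ≤ k₁ + 1 + 3 := by omega
          have h6 : (2:ℝ) ^ (j+1) ≤ 2 ^ (k₁ + 1) * 2 ^ 3 := by
            rw [← pow_add]
            exact pow_le_pow_right₀ one_le_two h5
          nlinarith [mul_le_mul_of_nonneg_right h6 hρ.le]
        exact (doubling_le hdb y (by positivity) hsub8).trans
          (mul_le_mul_left (hpow 3 (by omega)) _)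
    · push_neg at hA
      have hQavg : (⨍ z in ball y (2 ^ (2+1) * ρ), f z ∂μ) ≤ lam := hA 2 (by omega)
      refine ⟨a, ρ, y, 2 ^ (2+1) * ρ, hρ, by positivity, hρle, hya, hsubU, havg,
        ?_, hQavg, ?_⟩
      · intro z hz
        have h1 : dist z a < 6 * ρ := mem_ball.1 hz.1
        have h2 : dist a y < ρ := by rw [dist_comm]; exact mem_ball.1 hya
        have h3 : dist z y ≤ dist z a + dist a y := dist_triangle _ _ _
        rw [mem_ball]
        norm_num
        linarith
      · have hsub : (ball y (2 ^ (2+1) * ρ) : Set X) ⊆ ball a (2 ^ 4 * ρ) := by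
          intro z hz
          rw [mem_ball] at hz ⊢
          have h1 : dist z a ≤ dist z y + dist y a := dist_triangle _ _ _
          have h2 : dist y a < ρ := mem_ball.1 hya
          norm_num at hz ⊢
          linarith
        exact (measure_mono hsub).trans ((doubling_pow hdb a hρ 4).trans
          (mul_le_mul_left (hpow 4 (by omega)) _))
end GoodLambdaAux

/-- **Good-λ estimate (Lemma 3.5).** If `f` satisfies the reverse Hölder inequality with
exponent `1 < p < ∞` in a doubling metric measure space, then for every ball `B₀` and all
`λ > ess inf_{B₀} Mf` one has
`∫_{B₀ ∩ {Mf > λ}} f^p dμ ≤ c' λ^p μ(100B₀ ∩ {Mf > λ})`,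
with `c'` depending only on `p`, the doubling constant and the reverse Hölder constant. -/
theorem good_lambda_estimate {X : Type*} [MetricSpace X] [MeasurableSpace X] [BorelSpace X]
    (μ : Measure X)
    (hopen : ∀ U : Set X, IsOpen U → U.Nonempty → 0 < μ U)
    (hbdd : ∀ s : Set X, Bornology.IsBounded s → μ s < ⊤)
    (c_d : ℝ≥0) (hdb : IsDoublingMeasure μ c_d)
    (p c : ℝ) (hp : 1 < p) :
    ∃ c' : ℝ, 0 < c' ∧
      ∀ f : X → ℝ, (∀ x, 0 ≤ f x) →
        (∀ (x : X) (r : ℝ), 0 < r → IntegrableOn f (ball x r) μ) →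
        ReverseHolder μ p c f →
        ∀ (x₀ : X) (r₀ : ℝ), 0 < r₀ →
          ∀ lam : ℝ,
            essInf (restrictedMaximal μ f x₀ r₀) (μ.restrict (ball x₀ r₀)) < lam →
            ∫ y in ball x₀ r₀ ∩ {z | lam < restrictedMaximal μ f x₀ r₀ z}, f y ^ p ∂μ ≤
              c' * lam ^ p *
                (μ (ball x₀ (100 * r₀) ∩
                  {z | lam < restrictedMaximal μ f x₀ r₀ z})).toReal := by
  classical
  have hp0 : (0:ℝ) < p := lt_trans one_pos hp
  have hmaxcd : (0:ℝ) < max (c_d : ℝ) 1 := lt_of_lt_of_le one_pos (le_max_right _ _)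
  have hmaxc : (0:ℝ) < max c 1 := lt_of_lt_of_le one_pos (le_max_right _ _)
  refine ⟨(max (c_d : ℝ) 1) ^ 8 * (max c 1) ^ p, by positivity, ?_⟩
  intro f hf0 hfint hRH x₀ r₀ hr₀ lam hess
  set M : X → ℝ := restrictedMaximal μ f x₀ r₀ with hM
  set U : Set X := ball x₀ (100 * r₀) with hUdef
  have hr100 : (0:ℝ) < 100 * r₀ := by positivity
  have hUfin : μ U ≠ ⊤ := (hbdd U isBounded_ball).ne
  have hB₀pos : μ (ball x₀ r₀) ≠ 0 := (hopen _ isOpen_ball ⟨x₀, mem_ball_self hr₀⟩).ne'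
  have hJ0 : μ {z | ¬ BddAbove (maxSet μ f x₀ r₀ z)} = 0 :=
    junk_null hopen hbdd hdb hf0 hfint hr₀
  -- existence of a good point z₀
  have hzex : ∃ z₀, z₀ ∈ ball x₀ r₀ ∧ BddAbove (maxSet μ f x₀ r₀ z₀) ∧ M z₀ < lam := by
    by_contra hno
    push_neg at hno
    have hae : ∀ᵐ z ∂(μ.restrict (ball x₀ r₀)), lam ≤ M z := by
      rw [ae_restrict_iff' measurableSet_ball, ae_iff]
      refine measure_mono_null ?_ hJ0
      intro z hz
      simp only [Set.mem_setOf_eq, not_forall, not_le] at hz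
      obtain ⟨hzB, hzM⟩ := hz
      intro hb
      exact absurd (hno z hzB hb) (not_le.2 hzM)
    have hmem : μ.restrict (ball x₀ r₀) {x | M x < lam} = 0 := by
      have h1 := ae_iff.1 hae
      simpa [not_le] using h1
    have hbddset : BddAbove {a : ℝ | μ.restrict (ball x₀ r₀) {x | M x < a} = 0} := by
      by_contra hnb
      rw [not_bddAbove_iff] at hnb
      have hnull : ∀ n : ℕ, μ.restrict (ball x₀ r₀) {x | M x < (n : ℝ)} = 0 := by
        intro n
        obtain ⟨aa, haS, hna⟩ := hnb (n : ℝ)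
        exact measure_mono_null (fun x hx => lt_trans hx hna) haS
      have huniv : (Set.univ : Set X) ⊆ ⋃ n : ℕ, {x | M x < (n : ℝ)} := fun x _ => by
        obtain ⟨n, hn⟩ := exists_nat_gt (M x)
        exact Set.mem_iUnion.2 ⟨n, hn⟩
      have h0 : μ.restrict (ball x₀ r₀) Set.univ = 0 :=
        measure_mono_null huniv (measure_iUnion_null hnull)
      rw [Measure.restrict_apply_univ] at h0
      exact hB₀pos h0
    have hle : lam ≤ essInf M (μ.restrict (ball x₀ r₀)) := by
      rw [essInf_eq_sSup]
      exact le_csSup hbddset hmem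
    exact absurd hess (not_lt.2 hle)
  obtain ⟨z₀, hz₀B, hz₀bdd, hz₀lt⟩ := hzex
  have hlam : 0 < lam := lt_of_le_of_lt (maximal_nonneg x₀ r₀ z₀) hz₀lt
  have hz₀ : ∀ (b : X) (σ : ℝ), 0 < σ → z₀ ∈ ball b σ → ball b σ ⊆ U →
      (⨍ z in ball b σ, f z ∂μ) ≤ lam :=
    fun b σ h1 h2 h3 => le_trans (le_maximal hf0 hz₀bdd h1 h2 h3) hz₀lt.le
  set E : Set X := ball x₀ r₀ ∩ {z | lam < M z} with hEdef
  set E' : Set X := U ∩ {z | lam < M z} with hE'def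
  have hμE'fin : μ E' ≠ ⊤ :=
    ((measure_mono Set.inter_subset_left).trans_lt (hbdd U isBounded_ball)).ne
  rcases Set.eq_empty_or_nonempty E with hEe | hEne
  · rw [hEe, Measure.restrict_empty, integral_zero_measure]
    have h1 : (0:ℝ) ≤ lam ^ p := Real.rpow_nonneg hlam.le p
    have h2 : (0:ℝ) ≤ (max (c_d : ℝ) 1) ^ 8 * (max c 1) ^ p := by positivity
    exact mul_nonneg (mul_nonneg h2 h1) ENNReal.toReal_nonneg
  -- nontrivial case
  obtain ⟨y₀, hy₀⟩ := hEne
  have hc : 0 ≤ c := by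
    obtain ⟨a, ρ, hρ, hya, hsub, havg⟩ := exists_witness hf0 hlam.le hy₀.2
    have h1 := (hRH a ρ hρ).2
    have h2 : 0 ≤ (⨍ z in ball a ρ, f z ^ p ∂μ) ^ (1/p) :=
      Real.rpow_nonneg (avg_nonneg (fun z => Real.rpow_nonneg (hf0 z) p) measurableSet_ball) _
    by_contra hcneg
    push_neg at hcneg
    have havg0 : 0 < ⨍ z in ball a ρ, f z ∂μ := lt_trans hlam havg
    nlinarith
  have hPQ : ∀ y : E, ∃ a ρ b σ, 0 < ρ ∧ 0 < σ ∧ ρ ≤ 200 * r₀ ∧ (y : X) ∈ ball a ρ ∧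
      ball a ρ ⊆ U ∧ (lam < ⨍ z in ball a ρ, f z ∂μ) ∧
      (ball a (6 * ρ) ∩ ball x₀ r₀ ⊆ ball b σ) ∧ ((⨍ z in ball b σ, f z ∂μ) ≤ lam) ∧
      μ (ball b σ) ≤ (c_d : ℝ≥0∞) ^ 8 * μ (ball a ρ) :=
    fun y => exists_PQ hopen hbdd hdb hr₀ hlam hz₀B hz₀ y.2.1
      (exists_witness hf0 hlam.le y.2.2)
  choose Pa Pρ Qb Qσ hρpos hσpos hρle hmem hPsubU hPavg hcov hQavg hQμ using hPQ
  obtain ⟨u, hdisj, hcovu⟩ := vitali_balls Pa Pρ (200 * r₀) hρpos hρle hmem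
  have hcnt : u.Countable := countable_of_disjoint_balls hopen hbdd Pa Pρ hρpos
    isBounded_ball (fun i => hPsubU i) hdisj
  haveI := hcnt.to_subtype
  have hEcov : E ⊆ ⋃ i : u, ball (Qb i) (Qσ i) := by
    intro z hz
    obtain ⟨i, hi, hzi⟩ := hcovu ⟨z, hz⟩
    exact Set.mem_iUnion.2 ⟨⟨i, hi⟩, hcov i ⟨hzi, hz.1⟩⟩
  have hfpU : IntegrableOn (fun w => f w ^ p) U μ := (hRH x₀ _ hr100).1
  have hfp0 : ∀ z, (0:ℝ) ≤ f z ^ p := fun z => Real.rpow_nonneg (hf0 z) p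
  have hEU : E ⊆ U := fun z hz => ball_subset_ball (by linarith) hz.1
  have hfpE : IntegrableOn (fun w => f w ^ p) E μ := hfpU.mono_set hEU
  have hLHS : ∫ w in E, f w ^ p ∂μ = (∫⁻ w in E, ENNReal.ofReal (f w ^ p) ∂μ).toReal := by
    rw [integral_eq_lintegral_of_nonneg_ae (Filter.Eventually.of_forall fun z => hfp0 z)
      hfpE.aestronglyMeasurable]
  have hQ0 : ∀ i : E, μ (ball (Qb i) (Qσ i)) ≠ 0 :=
    fun i => (hopen _ isOpen_ball ⟨_, mem_ball_self (hσpos i)⟩).ne'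
  have hQfin : ∀ i : E, μ (ball (Qb i) (Qσ i)) ≠ ⊤ := fun i => (hbdd _ isBounded_ball).ne
  have hclp : (0:ℝ) ≤ (c * lam) ^ p := Real.rpow_nonneg (mul_nonneg hc hlam.le) p
  have hQint : ∀ i : E, ∫⁻ w in ball (Qb i) (Qσ i), ENNReal.ofReal (f w ^ p) ∂μ ≤
      ENNReal.ofReal ((c * lam) ^ p) * μ (ball (Qb i) (Qσ i)) := by
    intro i
    have h1 : ∫⁻ w in ball (Qb i) (Qσ i), ENNReal.ofReal (f w ^ p) ∂μ
        = ENNReal.ofReal (∫ w in ball (Qb i) (Qσ i), f w ^ p ∂μ) :=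
      (ofReal_integral_eq_lintegral_ofReal (hRH (Qb i) (Qσ i) (hσpos i)).1
        (Filter.Eventually.of_forall fun z => hfp0 z)).symm
    rw [h1]
    calc ENNReal.ofReal (∫ w in ball (Qb i) (Qσ i), f w ^ p ∂μ)
        ≤ ENNReal.ofReal ((μ (ball (Qb i) (Qσ i))).toReal * (c * lam) ^ p) :=
          ENNReal.ofReal_le_ofReal
            (rh_int_bound hRH hp hc hf0 (hσpos i) (hQ0 i) (hQfin i) (hQavg i))
      _ = ENNReal.ofReal ((c * lam) ^ p) * μ (ball (Qb i) (Qσ i)) := by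
          rw [mul_comm, ENNReal.ofReal_mul hclp, ENNReal.ofReal_toReal (hQfin i)]
  have hdisj' : Pairwise (Disjoint on fun i : u => ball (Pa i) (Pρ i)) := by
    intro i j hij
    exact hdisj i.2 j.2 (fun h => hij (Subtype.ext h))
  have hPsub : (⋃ i : u, ball (Pa i) (Pρ i)) ⊆
      E' ∪ {z | ¬ BddAbove (maxSet μ f x₀ r₀ z)} := by
    intro z hz
    obtain ⟨i, hzi⟩ := Set.mem_iUnion.1 hz
    by_cases hb : BddAbove (maxSet μ f x₀ r₀ z)
    · left
      exact ⟨hPsubU i hzi, lt_of_lt_of_le (hPavg i)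
        (le_maximal hf0 hb (hρpos i) hzi (hPsubU i))⟩
    · right; exact hb
  have hμP : μ (⋃ i : u, ball (Pa i) (Pρ i)) ≤ μ E' :=
    (measure_mono hPsub).trans (le_trans (measure_union_le _ _) (by rw [hJ0, add_zero]))
  have hsum : ∫⁻ w in E, ENNReal.ofReal (f w ^ p) ∂μ ≤
      ENNReal.ofReal ((c * lam) ^ p) * (c_d : ℝ≥0∞) ^ 8 * μ E' := by
    calc ∫⁻ w in E, ENNReal.ofReal (f w ^ p) ∂μ
        ≤ ∫⁻ w in ⋃ i : u, ball (Qb i) (Qσ i), ENNReal.ofReal (f w ^ p) ∂μ :=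
          lintegral_mono' (Measure.restrict_mono hEcov le_rfl) le_rfl
      _ ≤ ∑' i : u, ∫⁻ w in ball (Qb i) (Qσ i), ENNReal.ofReal (f w ^ p) ∂μ :=
          lintegral_iUnion_le _ _
      _ ≤ ∑' i : u, ENNReal.ofReal ((c * lam) ^ p) * μ (ball (Qb i) (Qσ i)) :=
          ENNReal.tsum_le_tsum (fun i => hQint i)
      _ ≤ ∑' i : u, ENNReal.ofReal ((c * lam) ^ p) *
            ((c_d : ℝ≥0∞) ^ 8 * μ (ball (Pa i) (Pρ i))) :=
          ENNReal.tsum_le_tsum (fun i => mul_le_mul_right (hQμ i) _)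
      _ = ENNReal.ofReal ((c * lam) ^ p) * (c_d : ℝ≥0∞) ^ 8 *
            ∑' i : u, μ (ball (Pa i) (Pρ i)) := by
          simp_rw [← mul_assoc, ENNReal.tsum_mul_left]
      _ = ENNReal.ofReal ((c * lam) ^ p) * (c_d : ℝ≥0∞) ^ 8 *
            μ (⋃ i : u, ball (Pa i) (Pρ i)) := by
          rw [measure_iUnion hdisj' (fun i => measurableSet_ball)]
      _ ≤ ENNReal.ofReal ((c * lam) ^ p) * (c_d : ℝ≥0∞) ^ 8 * μ E' :=
          mul_le_mul_right hμP _
  have hRHSfin : ENNReal.ofReal ((c * lam) ^ p) * (c_d : ℝ≥0∞) ^ 8 * μ E' ≠ ⊤ :=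
    ENNReal.mul_ne_top (ENNReal.mul_ne_top ENNReal.ofReal_ne_top
      (ENNReal.pow_ne_top ENNReal.coe_ne_top)) hμE'fin
  rw [hLHS]
  refine le_trans (ENNReal.toReal_mono hRHSfin hsum) ?_
  rw [ENNReal.toReal_mul, ENNReal.toReal_mul, ENNReal.toReal_ofReal hclp,
    ENNReal.toReal_pow, ENNReal.coe_toReal]
  have hsplit : (c * lam) ^ p = c ^ p * lam ^ p := Real.mul_rpow hc hlam.le
  have hcle : c ^ p ≤ (max c 1) ^ p :=
    Real.rpow_le_rpow hc (le_max_left _ _) hp0.le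
  have hcdle : ((c_d : ℝ)) ^ 8 ≤ (max (c_d : ℝ) 1) ^ 8 :=
    pow_le_pow_left₀ (c_d.coe_nonneg) (le_max_left _ _) 8
  have hlamp : (0:ℝ) ≤ lam ^ p := Real.rpow_nonneg hlam.le p
  have hcp : (0:ℝ) ≤ c ^ p := Real.rpow_nonneg hc p
  have hkey : (c * lam) ^ p * ((c_d : ℝ)) ^ 8 ≤
      (max (c_d : ℝ) 1) ^ 8 * (max c 1) ^ p * lam ^ p := by
    rw [hsplit]
    have h1 : c ^ p * ((c_d : ℝ)) ^ 8 ≤ (max c 1) ^ p * (max (c_d : ℝ) 1) ^ 8 := by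
      apply mul_le_mul hcle hcdle (by positivity) (by positivity)
    nlinarith [mul_le_mul_of_nonneg_right h1 hlamp]
  nlinarith [mul_le_mul_of_nonneg_right hkey (ENNReal.toReal_nonneg (a := μ E'))]
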